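/- Let p be a prime, n a positive natural number, and m = p^n. Let V = Fin m → ZMod p, let A ∈ GL_m(ZMod p) be the Jordan block with eigenvalue 1 (entries 1 on the diagonal and first superdiagonal, 0 elsewhere), and let G be the semidirect product of the additive group V by the cyclic subgroup generated by A inside GL_m(ZMod p), where A acts on V by matrix-vector multiplication. Then the element g = (e₀, A) of G, where e₀ ∈ V is the first standard basis vector, has order exactly p^(n+1); in particular g^(p^n) = (e_{m-1}, 1) ≠ 1, where e_{m-1} is the last standard basis vector. -/

import Mathlib

/-- The nilpotent upper-triangular Jordan block: entry `(i,j)` is `1` if `j = i + 1`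
and `0` otherwise. -/
def jordanNilp (p m : ℕ) : Matrix (Fin m) (Fin m) (ZMod p) :=
  Matrix.of fun i j => if (j : ℕ) = (i : ℕ) + 1 then 1 else 0

/-- The additive automorphism of `V = Fin m → ZMod p` given by right matrix-vector
multiplication (`vecMul`) by an invertible matrix `g`, i.e. `v ↦ v · g`. -/
def vecMulAut {p m : ℕ} (g : GL (Fin m) (ZMod p)) : AddAut (Fin m → ZMod p) where
  toFun v := Matrix.vecMul v (g : Matrix (Fin m) (Fin m) (ZMod p))
  invFun v := Matrix.vecMul v ((↑(g⁻¹) : Matrix (Fin m) (Fin m) (ZMod p)))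
  left_inv v := by simp [Matrix.vecMul_vecMul]
  right_inv v := by simp [Matrix.vecMul_vecMul]
  map_add' u v := Matrix.add_vecMul (g : Matrix (Fin m) (Fin m) (ZMod p)) u v

set_option maxHeartbeats 1000000 in
/-- The action of the cyclic subgroup `⟨A⟩ = Subgroup.zpowers A` on the (multiplicative
version of the) additive group `V = Fin m → ZMod p`, a matrix acting by right
matrix-vector multiplication `v ↦ v · A`. -/
def holPhi {p m : ℕ} (A : GL (Fin m) (ZMod p)) :
    ↥(Subgroup.zpowers A) →* MulAut (Multiplicative (Fin m → ZMod p)) where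
  toFun g := AddEquiv.toMultiplicative (vecMulAut (g : GL (Fin m) (ZMod p)))
  map_one' := by
    ext v
    simp [vecMulAut, AddEquiv.toMultiplicative]
  map_mul' g h := by
    rw [show g * h = h * g from Subtype.ext (by
      obtain ⟨a, ha⟩ := Subgroup.mem_zpowers_iff.mp g.2
      obtain ⟨b, hb⟩ := Subgroup.mem_zpowers_iff.mp h.2
      simp only [Subgroup.coe_mul]
      rw [← ha, ← hb]
      exact zpow_mul_comm A a b)]
    ext v
    simp [vecMulAut, AddEquiv.toMultiplicative, Matrix.vecMul_vecMul]

lemma jordanNilp_pow (p m k : ℕ) :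
    (jordanNilp p m) ^ k = Matrix.of (fun (i j : Fin m) => if (j : ℕ) = (i : ℕ) + k then 1 else 0) := by
  induction k with
  | zero =>
    ext i j
    simp [Matrix.one_apply, Fin.ext_iff, eq_comm]
  | succ k ih =>
    rw [pow_succ, ih]
    ext i j
    simp only [Matrix.mul_apply, Matrix.of_apply, jordanNilp]
    by_cases h : (j : ℕ) = (i : ℕ) + (k + 1)
    · have hl : (i : ℕ) + k < m := by omega
      rw [Finset.sum_eq_single (⟨(i : ℕ) + k, hl⟩ : Fin m)]
      · rw [if_pos rfl, if_pos (by simp; omega), if_pos h, one_mul]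
      · intro l _ hl'
        rw [if_neg, zero_mul]
        intro hc
        exact hl' (Fin.ext (by simpa using hc))
      · intro hmem; exact absurd (Finset.mem_univ _) hmem
    · rw [if_neg h]
      apply Finset.sum_eq_zero
      intro l _
      rcases eq_or_ne ((l : ℕ)) ((i : ℕ) + k) with h1 | h1
      · rw [if_pos h1, if_neg (by omega), mul_zero]
      · rw [if_neg h1, zero_mul]

lemma vecMul_jordanNilp {p m : ℕ} (v : Fin m → ZMod p) :
    Matrix.vecMul v (jordanNilp p m)
      = fun (j : Fin m) => if h : 0 < (j : ℕ) then
          v ⟨(j : ℕ) - 1, Nat.lt_of_le_of_lt (Nat.sub_le _ _) j.2⟩ else 0 := by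
  funext j
  simp only [Matrix.vecMul, dotProduct, jordanNilp, Matrix.of_apply, mul_ite, mul_one,
    mul_zero]
  split
  case isTrue h =>
    rw [Finset.sum_eq_single (⟨(j : ℕ) - 1, Nat.lt_of_le_of_lt (Nat.sub_le _ _) j.2⟩ : Fin m)]
    · rw [if_pos (by simp; omega)]
    · intro l _ hl'
      rw [if_neg]
      intro hc
      exact hl' (Fin.ext (show (l : ℕ) = (j : ℕ) - 1 by omega))
    · intro hmem; exact absurd (Finset.mem_univ _) hmem
  case isFalse h =>
    apply Finset.sum_eq_zero
    intro l _
    rw [if_neg (by omega)]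

theorem orderOf_holomorph_element (p m n : ℕ) [Fact p.Prime]
    (hn : 0 < n) (hm : m = p ^ n)
    (A : GL (Fin m) (ZMod p))
    (hA : (A : Matrix (Fin m) (Fin m) (ZMod p)) = 1 + jordanNilp p m)
    (g : Multiplicative (Fin m → ZMod p) ⋊[holPhi A] ↥(Subgroup.zpowers A))
    (hg : g = ⟨Multiplicative.ofAdd
        (Pi.single (⟨0, hm ▸ pow_pos (Fact.out (p := p.Prime)).pos n⟩ : Fin m) 1),
        ⟨A, Subgroup.mem_zpowers A⟩⟩) :
    orderOf g = p ^ (n + 1) ∧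
    g ^ (p ^ n) = ⟨Multiplicative.ofAdd
        (Pi.single (⟨m - 1, Nat.sub_lt (hm ▸ pow_pos (Fact.out (p := p.Prime)).pos n) one_pos⟩ : Fin m) 1),
        1⟩ ∧
    g ^ (p ^ n) ≠ 1 := by
  have hp : p.Prime := Fact.out
  have hm0 : 0 < m := hm ▸ pow_pos hp.pos n
  haveI : Nonempty (Fin m) := ⟨⟨0, hm0⟩⟩
  haveI : Fact (1 < p) := ⟨hp.one_lt⟩
  -- A ^ (p ^ n) = 1
  have hApow : A ^ p ^ n = 1 := by
    apply Units.ext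
    rw [Units.val_pow_eq_pow_val, hA, Units.val_one]
    rw [add_pow_char_pow_of_commute p n (Commute.one_left (jordanNilp p m)), one_pow,
      jordanNilp_pow]
    ext i j
    simp only [Matrix.of_apply, Matrix.add_apply]
    rw [if_neg (by have := j.2; omega), add_zero]
  -- power formula
  have key : ∀ k : ℕ, g ^ k =
      ⟨Multiplicative.ofAdd (fun j : Fin m => ((Nat.choose k ((j : ℕ) + 1) : ℕ) : ZMod p)),
        ⟨A, Subgroup.mem_zpowers A⟩ ^ k⟩ := by
    intro k
    induction k with
    | zero =>
      have h0 : (fun j : Fin m => ((Nat.choose 0 ((j : ℕ) + 1) : ℕ) : ZMod p)) = 0 := by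
        funext j
        simp [Nat.choose_zero_succ]
      rw [pow_zero, h0, pow_zero]
      rfl
    | succ k ih =>
      rw [pow_succ', ih]
      conv_lhs => rw [hg]
      refine SemidirectProduct.ext ?_ ?_
      · show Multiplicative.ofAdd _ * holPhi A ⟨A, Subgroup.mem_zpowers A⟩
          (Multiplicative.ofAdd _) = _
        have hact : holPhi A ⟨A, Subgroup.mem_zpowers A⟩
            (Multiplicative.ofAdd (fun j : Fin m => ((Nat.choose k ((j : ℕ) + 1) : ℕ) : ZMod p)))
            = Multiplicative.ofAdd
              (Matrix.vecMul (fun j : Fin m => ((Nat.choose k ((j : ℕ) + 1) : ℕ) : ZMod p))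
                (A : Matrix (Fin m) (Fin m) (ZMod p))) := rfl
        rw [hact, ← ofAdd_add]
        congr 1
        funext j
        rw [hA, Matrix.vecMul_add, Matrix.vecMul_one, vecMul_jordanNilp]
        simp only [Pi.add_apply]
        by_cases hj : 0 < (j : ℕ)
        · rw [dif_pos hj, Pi.single_apply,
            if_neg (fun hc => by have : (j : ℕ) = 0 := congrArg Fin.val hc; omega), zero_add]
          have h1 : (j : ℕ) - 1 + 1 = (j : ℕ) := by omega
          show ((Nat.choose k ((j : ℕ) + 1) : ℕ) : ZMod p)
              + ((Nat.choose k ((j : ℕ) - 1 + 1) : ℕ) : ZMod p)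
              = ((Nat.choose (k + 1) ((j : ℕ) + 1) : ℕ) : ZMod p)
          rw [h1, Nat.choose_succ_succ, Nat.cast_add, add_comm]
        · rw [dif_neg hj, Pi.single_apply, if_pos (Fin.ext (show (j : ℕ) = 0 by omega)), add_zero]
          show (1 : ZMod p) + ((Nat.choose k ((j : ℕ) + 1) : ℕ) : ZMod p)
              = ((Nat.choose (k + 1) ((j : ℕ) + 1) : ℕ) : ZMod p)
          have hj0 : (j : ℕ) = 0 := by omega
          rw [hj0, Nat.choose_succ_succ, Nat.cast_add, Nat.choose_zero_right, Nat.cast_one]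
      · show _ * _ = _
        rw [← pow_succ']
  -- g ^ (p ^ n)
  have hsingle : (fun j : Fin m => ((Nat.choose (p ^ n) ((j : ℕ) + 1) : ℕ) : ZMod p))
      = Pi.single (⟨m - 1, Nat.sub_lt hm0 one_pos⟩ : Fin m) 1 := by
    funext j
    rw [Pi.single_apply]
    by_cases hj : (j : ℕ) = m - 1
    · rw [if_pos (Fin.ext hj), hj]
      have : m - 1 + 1 = p ^ n := by omega
      rw [this, Nat.choose_self, Nat.cast_one]
    · rw [if_neg (fun hc => hj (congrArg Fin.val hc))]
      have h1 : (j : ℕ) + 1 ≠ 0 := by omega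
      have h2 : (j : ℕ) + 1 ≠ p ^ n := by have := j.2; omega
      rw [ZMod.natCast_eq_zero_iff]
      exact hp.dvd_choose_pow h1 h2
  have hgp : g ^ p ^ n = ⟨Multiplicative.ofAdd
      (Pi.single (⟨m - 1, Nat.sub_lt hm0 one_pos⟩ : Fin m) 1), 1⟩ := by
    rw [key (p ^ n), hsingle]
    refine SemidirectProduct.ext rfl ?_
    show (⟨A, Subgroup.mem_zpowers A⟩ : Subgroup.zpowers A) ^ p ^ n = 1
    exact Subtype.ext (by rw [SubmonoidClass.coe_pow]; exact hApow)
  have hne : g ^ p ^ n ≠ 1 := by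
    rw [hgp]
    intro h
    have h2 := congrArg (fun x : Multiplicative (Fin m → ZMod p) ⋊[holPhi A]
        ↥(Subgroup.zpowers A) =>
        (Multiplicative.toAdd x.left) (⟨m - 1, Nat.sub_lt hm0 one_pos⟩ : Fin m)) h
    simp only [SemidirectProduct.one_left, toAdd_ofAdd, Pi.single_eq_same] at h2
    exact one_ne_zero h2
  have hppow : g ^ p ^ (n + 1) = 1 := by
    rw [pow_succ, pow_mul, hgp]
    have hrfl : (⟨Multiplicative.ofAdd
        (Pi.single (⟨m - 1, Nat.sub_lt hm0 one_pos⟩ : Fin m) 1), 1⟩ :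
        Multiplicative (Fin m → ZMod p) ⋊[holPhi A] ↥(Subgroup.zpowers A))
        = SemidirectProduct.inl (Multiplicative.ofAdd
          (Pi.single (⟨m - 1, Nat.sub_lt hm0 one_pos⟩ : Fin m) 1 : Fin m → ZMod p)) := rfl
    rw [hrfl, ← map_pow, ← ofAdd_nsmul]
    have hs : p • (Pi.single (⟨m - 1, Nat.sub_lt hm0 one_pos⟩ : Fin m) (1 : ZMod p) : Fin m → ZMod p) = 0 := by
      funext j
      simp only [Pi.smul_apply, Pi.zero_apply, nsmul_eq_mul, ZMod.natCast_self, zero_mul]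
    rw [hs, ofAdd_zero, map_one]
  refine ⟨orderOf_eq_prime_pow hne hppow, hgp, hne⟩
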